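/- With 𝒮ᵢ as above and ℛᵢ the automorphism of the pair (Fₙ, Mₙ) swapping xᵢ ↔ x_{i+1} and Kᵢ ↔ K_{i+1} (fixing other generators, extended semilinearly), the mixed relation ℛ_{i+1} ∘ ℛᵢ ∘ 𝒮_{i+1} = 𝒮ᵢ ∘ ℛ_{i+1} ∘ ℛᵢ holds for 1 ≤ i ≤ n−2. -/

import Mathlib

/-- The free group `Fₙ` on generators `x₀, …, x_{n-1}` (0-based indexing). -/
abbrev FG (n : ℕ) := FreeGroup (Fin n)
/-- The group ring `ℤ[Fₙ]`. -/
abbrev GR (n : ℕ) := MonoidAlgebra ℤ (FG n)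
/-- The free `ℤ[Fₙ]`-module `Mₙ` on `K₀, …, K_{n-1}`. -/
abbrev M (n : ℕ) := Fin n →₀ GR n

/-- The generator `xᵢ`. -/
def X {n : ℕ} (i : Fin n) : FG n := FreeGroup.of i
/-- The module generator `Kᵢ`. -/
noncomputable def K {n : ℕ} (i : Fin n) : M n := Finsupp.single i 1

/-- The action `g ▷ m` of `Fₙ` on `Mₙ`, via the `ℤ[Fₙ]`-module structure. -/
noncomputable def act {n : ℕ} (g : FG n) (m : M n) : M n :=
  (MonoidAlgebra.of ℤ (FG n) g) • m

def fin0 (n i : ℕ) (h : i + 1 < n) : Fin n := ⟨i, Nat.lt_of_succ_lt h⟩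
def fin1 (n i : ℕ) (h : i + 1 < n) : Fin n := ⟨i + 1, h⟩

/-- The additive endomorphism of `Mₙ`, semilinear over the group endomorphism `f1`
(i.e. `m ↦ g ▷ m` goes to `m ↦ f1 g ▷ m`), determined by the images `t i` of the
generators `K i`. -/
noncomputable def lift2 {n : ℕ} (f1 : FG n →* FG n) (t : Fin n → M n) : M n →+ M n :=
  Finsupp.liftAddHom fun i =>
    { toFun := fun r => (MonoidAlgebra.mapDomainRingHom ℤ f1 r) • t i
      map_zero' := by simp
      map_add' := by intro a b; rw [map_add, add_smul] }

/-- First component of the lifted Artin automorphism `𝒮ᵢ`. -/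
def S1 (n i : ℕ) (h : i + 1 < n) : FG n →* FG n :=
  FreeGroup.lift fun j =>
    if (j : ℕ) = i then X (fin1 n i h)
    else if (j : ℕ) = i + 1 then (X (fin1 n i h))⁻¹ * X (fin0 n i h) * X (fin1 n i h)
    else X j

/-- Second component of the lifted Artin automorphism `𝒮ᵢ`:
`Kᵢ ↦ Kᵢ + K_{i+1} − x_{i+1}⁻¹ ▷ Kᵢ`, `K_{i+1} ↦ x_{i+1}⁻¹ ▷ Kᵢ`, fixing other `Kⱼ`,
extended semilinearly over `𝒮ᵢ¹`. -/
noncomputable def S2 (n i : ℕ) (h : i + 1 < n) : M n →+ M n :=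
  lift2 (S1 n i h) fun j =>
    if (j : ℕ) = i then
      K (fin0 n i h) + K (fin1 n i h) - act (X (fin1 n i h))⁻¹ (K (fin0 n i h))
    else if (j : ℕ) = i + 1 then act (X (fin1 n i h))⁻¹ (K (fin0 n i h))
    else K j

/-- First component of the inverse `𝒮̄ᵢ`: `xᵢ ↦ xᵢ x_{i+1} xᵢ⁻¹`, `x_{i+1} ↦ xᵢ`. -/
def Sbar1 (n i : ℕ) (h : i + 1 < n) : FG n →* FG n :=
  FreeGroup.lift fun j =>
    if (j : ℕ) = i then X (fin0 n i h) * X (fin1 n i h) * (X (fin0 n i h))⁻¹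
    else if (j : ℕ) = i + 1 then X (fin0 n i h)
    else X j

/-- Second component of the inverse `𝒮̄ᵢ`: `Kᵢ ↦ xᵢ ▷ K_{i+1}`,
`K_{i+1} ↦ Kᵢ + K_{i+1} − xᵢ ▷ K_{i+1}`, fixing other `Kⱼ`. -/
noncomputable def Sbar2 (n i : ℕ) (h : i + 1 < n) : M n →+ M n :=
  lift2 (Sbar1 n i h) fun j =>
    if (j : ℕ) = i then act (X (fin0 n i h)) (K (fin1 n i h))
    else if (j : ℕ) = i + 1 then
      K (fin0 n i h) + K (fin1 n i h) - act (X (fin0 n i h)) (K (fin1 n i h))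
    else K j

/-- First component of the transposition automorphism `ℛᵢ`. -/
def R1 (n i : ℕ) (h : i + 1 < n) : FG n →* FG n :=
  FreeGroup.lift fun j =>
    if (j : ℕ) = i then X (fin1 n i h)
    else if (j : ℕ) = i + 1 then X (fin0 n i h)
    else X j

/-- Second component of `ℛᵢ`: swaps `Kᵢ` and `K_{i+1}`, fixing other `Kⱼ`. -/
noncomputable def R2 (n i : ℕ) (h : i + 1 < n) : M n →+ M n :=
  lift2 (R1 n i h) fun j =>
    if (j : ℕ) = i then K (fin1 n i h)
    else if (j : ℕ) = i + 1 then K (fin0 n i h)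
    else K j

/-- First component of the inversion automorphism `𝒯ᵢ`: `xᵢ ↦ xᵢ⁻¹`. -/
def T1 (n i : ℕ) (h : i < n) : FG n →* FG n :=
  FreeGroup.lift fun j => if (j : ℕ) = i then (X (⟨i, h⟩ : Fin n))⁻¹ else X j

/-- Second component of `𝒯ᵢ`: fixes each `Kⱼ`, extended semilinearly over `𝒯ᵢ¹`. -/
noncomputable def T2 (n i : ℕ) (h : i < n) : M n →+ M n :=
  lift2 (T1 n i h) fun j => K j


lemma lift2_single {n : ℕ} (f1 : FG n →* FG n) (t : Fin n → M n) (j : Fin n) (r : GR n) :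
    lift2 f1 t (Finsupp.single j r) = (MonoidAlgebra.mapDomainRingHom ℤ f1 r) • t j := by
  simp [lift2]

lemma lift2_K {n : ℕ} (f1 : FG n →* FG n) (t : Fin n → M n) (j : Fin n) :
    lift2 f1 t (K j) = t j := by
  simp [K, lift2_single]

lemma lift2_smul {n : ℕ} (f1 : FG n →* FG n) (t : Fin n → M n) (a : GR n) (m : M n) :
    lift2 f1 t (a • m) = (MonoidAlgebra.mapDomainRingHom ℤ f1 a) • lift2 f1 t m := by
  induction m using Finsupp.induction_linear with
  | zero => simp
  | add f g hf hg => rw [smul_add, map_add, hf, hg, map_add, smul_add]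
  | single j r => rw [Finsupp.smul_single', lift2_single, lift2_single, map_mul, mul_smul]

lemma lift2_act {n : ℕ} (f1 : FG n →* FG n) (t : Fin n → M n) (g : FG n) (m : M n) :
    lift2 f1 t (act g m) = act (f1 g) (lift2 f1 t m) := by
  rw [act, lift2_smul, act]
  congr 1
  simp [MonoidAlgebra.of_apply, Finsupp.mapDomain_single]

lemma lift2_comp {n : ℕ} (f1 g1 : FG n →* FG n) (t s : Fin n → M n) :
    (lift2 f1 t).comp (lift2 g1 s) = lift2 (f1.comp g1) fun j => lift2 f1 t (s j) := by
  apply Finsupp.addHom_ext; intro j r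
  simp only [AddMonoidHom.comp_apply, lift2_single, lift2_smul]
  congr 1
  rw [MonoidAlgebra.mapDomainRingHom_comp, RingHom.comp_apply]

/-- mixed relation `ℛ_{i+1} ∘ ℛᵢ ∘ 𝒮_{i+1} = 𝒮ᵢ ∘ ℛ_{i+1} ∘ ℛᵢ` for the
automorphisms of the pair `(Fₙ, Mₙ)`. -/
theorem liftedArtin_mixed_RRS (n i : ℕ) (h2 : i + 2 < n) (h1 : i + 1 < n) :
    (R1 n (i + 1) h2).comp ((R1 n i h1).comp (S1 n (i + 1) h2)) =
      (S1 n i h1).comp ((R1 n (i + 1) h2).comp (R1 n i h1)) ∧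
    (R2 n (i + 1) h2).comp ((R2 n i h1).comp (S2 n (i + 1) h2)) =
      (S2 n i h1).comp ((R2 n (i + 1) h2).comp (R2 n i h1)) := by
  have e01 : i ≠ i + 1 := by omega
  have e02 : i ≠ i + 2 := by omega
  have e10 : i + 1 ≠ i := by omega
  have e12 : i + 1 ≠ i + 2 := by omega
  have e20 : i + 2 ≠ i := by omega
  have e21 : i + 2 ≠ i + 1 := by omega
  have part1 : (R1 n (i + 1) h2).comp ((R1 n i h1).comp (S1 n (i + 1) h2)) =
      (S1 n i h1).comp ((R1 n (i + 1) h2).comp (R1 n i h1)) := by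
    apply FreeGroup.ext_hom
    rintro ⟨v, hv⟩
    by_cases h0 : v = i
    · subst h0
      simp [S1, R1, X, fin0, fin1, e01, e02, e10, e12, e20, e21]
    by_cases ha : v = i + 1
    · subst ha
      simp [S1, R1, X, fin0, fin1, e01, e02, e10, e12, e20, e21]
    by_cases hb : v = i + 2
    · subst hb
      simp [S1, R1, X, fin0, fin1, e01, e02, e10, e12, e20, e21]
    · simp [S1, R1, X, fin0, fin1, h0, ha, hb]
  refine ⟨part1, ?_⟩
  show (lift2 (R1 n (i+1) h2) _).comp ((lift2 (R1 n i h1) _).comp (lift2 (S1 n (i+1) h2) _)) =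
    (lift2 (S1 n i h1) _).comp ((lift2 (R1 n (i+1) h2) _).comp (lift2 (R1 n i h1) _))
  rw [lift2_comp, lift2_comp, lift2_comp, lift2_comp, part1]
  congr 1
  funext j
  have e22 : i + 1 + 1 = i + 2 := by omega
  rcases j with ⟨v, hv⟩
  by_cases h0 : v = i
  · subst h0
    simp [S2, R2, S1, R1, X, fin0, fin1, lift2_K, lift2_act, map_add, map_sub, map_inv,
      FreeGroup.lift_apply_of, e22, e01, e02, e10, e12, e20, e21]
  by_cases ha : v = i + 1
  · subst ha
    simp [S2, R2, S1, R1, X, fin0, fin1, lift2_K, lift2_act, map_add, map_sub, map_inv,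
      FreeGroup.lift_apply_of, e22, e01, e02, e10, e12, e20, e21]
  by_cases hb : v = i + 2
  · subst hb
    simp [S2, R2, S1, R1, X, fin0, fin1, lift2_K, lift2_act, map_add, map_sub, map_inv,
      FreeGroup.lift_apply_of, e22, e01, e02, e10, e12, e20, e21]
  · simp [S2, R2, S1, R1, X, fin0, fin1, lift2_K, lift2_act, map_add, map_sub, map_inv,
      FreeGroup.lift_apply_of, e22, e01, e02, e10, e12, e20, e21, h0, ha, hb]
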